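/- Let Γ be a mixed identity free group. Then Γ satisfies no nontrivial mixed identity in several variables: for every m ≥ 1 and every nontrivial element w of the free product Γ ∗ F_m, where F_m is the free group on generators x₁, …, x_m, there exist elements γ₁, …, γ_m ∈ Γ such that the image of w under the homomorphism Γ ∗ F_m → Γ restricting to the identity on Γ and sending x_i to γ_i is nontrivial. -/

import Mathlib

open Matrix

/-- The free product `Γ ∗ ⟨x⟩` of a group `Γ` with an infinite cyclic group `⟨x⟩`. -/
abbrev MixedWordGroup (G : Type*) [Group G] : Type _ :=
  Monoid.Coprod G (Multiplicative ℤ)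

/-- The distinguished generator `x` of the free factor `⟨x⟩` in `Γ ∗ ⟨x⟩`. -/
def xGen (G : Type*) [Group G] : MixedWordGroup G :=
  Monoid.Coprod.inr (Multiplicative.ofAdd (1 : ℤ))

/-- Evaluation of a mixed word: the unique homomorphism `Γ ∗ ⟨x⟩ → Γ` restricting to the
identity on `Γ` and sending `x` to `γ`. -/
def evalWord {G : Type*} [Group G] (γ : G) : MixedWordGroup G →* G :=
  Monoid.Coprod.lift (MonoidHom.id G) (zpowersHom G γ)

/-- Word length of `g` with respect to the set `S`. -/
noncomputable def wordLength {G : Type*} [Group G] (S : Set G) (g : G) : ℕ :=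
  sInf {n | ∃ l : List G, (∀ a ∈ l, a ∈ S) ∧ l.length = n ∧ l.prod = g}

/-- The generating set `X ∪ {x, x⁻¹}` of `Γ ∗ ⟨x⟩`. -/
def mixedGenSet {G : Type*} [Group G] (X : Set G) : Set (MixedWordGroup G) :=
  (Monoid.Coprod.inl '' X) ∪ {xGen G, (xGen G)⁻¹}


/-- The free product `Γ ∗ F_m` of a group `Γ` with the free group on `m` generators. -/
abbrev MultiMixedWordGroup (G : Type*) [Group G] (m : ℕ) : Type _ :=
  Monoid.Coprod G (FreeGroup (Fin m))

/-- Evaluation of a word in `Γ ∗ F_m`: the unique homomorphism `Γ ∗ F_m → Γ` restricting to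
the identity on `Γ` and sending the generator `xᵢ` to `γ i`. -/
def evalMultiWord {G : Type*} [Group G] {m : ℕ} (γ : Fin m → G) :
    MultiMixedWordGroup G m →* G :=
  Monoid.Coprod.lift (MonoidHom.id G) (FreeGroup.lift γ)


open Monoid Monoid.CoprodI

namespace Stmt5Aux

universe u
variable {G : Type u} [Group G]

abbrev ZG : Type u := ULift.{u} (Multiplicative ℤ)

def M2 (G : Type u) [Group G] : Bool → Type u := fun b => cond b G ZG

instance M2.instGroup : ∀ b, Group (M2 G b)
  | true => inferInstanceAs (Group G)
  | false => inferInstanceAs (Group ZG)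

noncomputable local instance : ∀ b, DecidableEq (M2 G b) := fun _ => Classical.decEq _

def tl (e : ℤ) : ZG := ULift.up (Multiplicative.ofAdd e)

lemma tl_mul (e e' : ℤ) : tl e * tl e' = tl (e + e') := rfl

lemma tl_ne_one {e : ℤ} (he : e ≠ 0) : tl e ≠ (1 : ZG) := by
  simp [tl, ULift.ext_iff, he]

lemma tl_inj {e e' : ℤ} (h : tl e = tl e') : e = e' := by
  simpa [tl, ULift.ext_iff] using h

lemma smul_toList_of_ne {b : Bool} (x : M2 G b) (hx : x ≠ 1) (w : Word (M2 G))
    (hw : w.fstIdx ≠ some b) :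
    (CoprodI.of x • w).toList = ⟨b, x⟩ :: w.toList := by
  rw [← Word.cons_eq_smul (h1 := hw) (h2 := hx)]
  rfl

lemma exists_decomp (w : Word (M2 G)) {b : Bool} {x : M2 G b} {l} (hw : w.toList = ⟨b, x⟩ :: l) :
    ∃ w' : Word (M2 G), w'.toList = l ∧ w'.fstIdx ≠ some b ∧ x ≠ 1 ∧
      w = CoprodI.of x • w' := by
  have hx : x ≠ 1 := w.ne_one ⟨b, x⟩ (by rw [hw]; exact List.mem_cons_self)
  have hch : l.Chain' fun a a' => Sigma.fst a ≠ Sigma.fst a' := by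
    have := w.chain_ne
    rw [hw] at this
    exact this.tail
  have hhd : ∀ a ∈ l.head?, b ≠ Sigma.fst a := by
    have := w.chain_ne
    rw [hw, List.isChain_cons] at this
    exact this.1
  refine ⟨⟨l, ?_, hch⟩, rfl, ?_, hx, ?_⟩
  · intro a ha
    exact w.ne_one a (by rw [hw]; exact List.mem_cons_of_mem _ ha)
  · exact Word.fstIdx_ne_iff.2 hhd
  · apply Word.ext
    rw [smul_toList_of_ne x hx _ (Word.fstIdx_ne_iff.2 hhd)]
    exact hw

end Stmt5Aux

namespace Stmt5Aux
section
universe v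
variable {G : Type v} [Group G]

noncomputable local instance : ∀ b, DecidableEq (M2 G b) := fun _ => Classical.decEq _

/-- letter maps into the free product -/
abbrev oZ (e : ℤ) : CoprodI (M2 G) := CoprodI.of (M := M2 G) (i := false) (tl e)
abbrev oG (g : G) : CoprodI (M2 G) := CoprodI.of (M := M2 G) (i := true) g

lemma fstIdx_of_toList {w : Word (M2 G)} {a l} (hw : w.toList = a :: l) :
    w.fstIdx = some a.1 := by
  simp [Word.fstIdx, hw]

/-- prepending a `ℤ`-letter -/
lemma zstep (e : ℤ) (he : e ≠ 0) (w : Word (M2 G))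
    (hw : (∃ g : G, ∃ l, w.toList = ⟨true, g⟩ :: l) ∨
      (∃ e' l, w.toList = ⟨false, tl e'⟩ :: l ∧ e + e' ≠ 0)) :
    ∃ e'' l, ((oZ (G := G) e) • w).toList = ⟨false, tl e''⟩ :: l ∧ e'' ≠ 0 := by
  rcases hw with ⟨g, l, hw⟩ | ⟨e', l, hw, hne⟩
  · refine ⟨e, ⟨true, g⟩ :: l, ?_, he⟩
    rw [smul_toList_of_ne (b := false) (tl e) (tl_ne_one he) w
      (by rw [fstIdx_of_toList hw]; simp), hw]
  · obtain ⟨w', hl', hfst, hx, rfl⟩ := exists_decomp w hw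
    erw [← mul_smul, ← _root_.map_mul, tl_mul]
    refine ⟨e + e', w'.toList, ?_, hne⟩
    rw [smul_toList_of_ne (b := false) _ (tl_ne_one hne) w' hfst]

/-- prepending a `G`-letter to a word starting with a `ℤ`-letter -/
lemma gstep (g : G) (hg : g ≠ 1) (w : Word (M2 G))
    (hw : ∃ (a : ZG) (l : _), w.toList = ⟨false, a⟩ :: l) :
    ((oG (G := G) g) • w).toList = ⟨true, g⟩ :: w.toList := by
  obtain ⟨a, l, hw⟩ := hw
  exact smul_toList_of_ne (b := true) g hg w (by rw [fstIdx_of_toList hw]; simp)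
end
end Stmt5Aux

namespace Stmt5Aux
section
universe v
variable {G : Type v} [Group G]

noncomputable local instance : ∀ b, DecidableEq (M2 G b) := fun _ => Classical.decEq _

variable {m : ℕ}

def av (i : Fin m) : ℤ := ((i : ℕ) : ℤ) + 1
def bv (i : Fin m) : ℤ := ((m : ℕ) : ℤ) - ((i : ℕ) : ℤ)
def mark (i : Fin m) : ZMod (m + 1) := (((i : ℕ) + 1 : ℕ) : ZMod (m + 1))

lemma av_pos (i : Fin m) : 0 < av i := by unfold av; positivity
lemma bv_pos (i : Fin m) : 0 < bv i := by have := i.isLt; unfold bv; omega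
lemma av_add_bv (i : Fin m) : av i + bv i = ((m : ℕ) : ℤ) + 1 := by unfold av bv; ring

lemma cast_m : (((m : ℕ)) : ZMod (m + 1)) = -1 := by
  have h := ZMod.natCast_self (m + 1)
  push_cast at h
  linear_combination h

lemma cast_av (i : Fin m) : ((av i : ℤ) : ZMod (m + 1)) = mark i := by
  unfold av mark; push_cast; ring

lemma cast_neg_bv (i : Fin m) : ((-(bv i) : ℤ) : ZMod (m + 1)) = mark i := by
  have h := cast_m (m := m)
  unfold bv mark
  push_cast
  linear_combination -h

lemma mark_ne_zero (i : Fin m) : mark i ≠ 0 := by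
  intro h
  rw [mark, ZMod.natCast_eq_zero_iff] at h
  have h1 := i.isLt
  have h2 := Nat.le_of_dvd (by omega) h
  omega

lemma mark_inj {i j : Fin m} (h : mark i = mark j) : i = j := by
  have hi : ((i : ℕ) + 1) < m + 1 := by have := i.isLt; omega
  have hj : ((j : ℕ) + 1) < m + 1 := by have := j.isLt; omega
  have hv := congrArg ZMod.val h
  rw [mark, mark, ZMod.val_cast_of_lt hi, ZMod.val_cast_of_lt hj] at hv
  exact Fin.ext (by omega)

end
end Stmt5Aux

namespace Stmt5Aux
section
universe v
variable {G : Type v} [Group G]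

noncomputable local instance : ∀ b, DecidableEq (M2 G b) := fun _ => Classical.decEq _

variable {m : ℕ}

lemma tl_inv (e : ℤ) : (tl e)⁻¹ = tl (-e) := rfl

/-- the image of the `i`-th free generator -/
def cel (h : G) (i : Fin m) : CoprodI (M2 G) := oZ (av i) * oG h * oZ (bv i)

lemma cel_inv (h : G) (i : Fin m) :
    (cel h i)⁻¹ = oZ (G := G) (-(bv i)) * oG h⁻¹ * oZ (-(av i)) := by
  rw [cel, _root_.mul_inv_rev, _root_.mul_inv_rev]
  simp only [oZ, oG]
  erw [← map_inv, ← map_inv, ← map_inv, tl_inv, tl_inv, mul_assoc]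
  rfl

lemma cel_smul (h : G) (hh : h ≠ 1) (i : Fin m) (w : Word (M2 G))
    (hw : (∃ g : G, ∃ l, w.toList = ⟨true, g⟩ :: l) ∨
      (∃ e' l, w.toList = ⟨false, tl e'⟩ :: l ∧ bv i + e' ≠ 0)) :
    ∃ l, ((cel h i) • w).toList = ⟨false, tl (av i)⟩ :: l := by
  have h1 : cel h i • w = oZ (G := G) (av i) • (oG (G := G) h • (oZ (G := G) (bv i) • w)) := by
    rw [cel, mul_smul, mul_smul]
  obtain ⟨e'', l1, hl1, -⟩ := zstep (bv i) (bv_pos i).ne' w hw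
  have hl2 := gstep h hh _ ⟨tl e'', l1, hl1⟩
  refine ⟨(oG (G := G) h • oZ (G := G) (bv i) • w).toList, ?_⟩
  rw [h1]
  exact smul_toList_of_ne (b := false) (tl (av i)) (tl_ne_one (av_pos i).ne') _
    (by rw [fstIdx_of_toList hl2]; simp)

lemma cel_inv_smul (h : G) (hh : h ≠ 1) (i : Fin m) (w : Word (M2 G))
    (hw : (∃ g : G, ∃ l, w.toList = ⟨true, g⟩ :: l) ∨
      (∃ e' l, w.toList = ⟨false, tl e'⟩ :: l ∧ -(av i) + e' ≠ 0)) :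
    ∃ l, ((cel h i)⁻¹ • w).toList = ⟨false, tl (-(bv i))⟩ :: l := by
  have h1 : (cel h i)⁻¹ • w = oZ (G := G) (-(bv i)) • (oG (G := G) h⁻¹ • (oZ (G := G) (-(av i)) • w)) := by
    rw [cel_inv, mul_smul, mul_smul]
  obtain ⟨e'', l1, hl1, -⟩ := zstep (-(av i)) (by have := av_pos i; omega) w hw
  have hl2 := gstep h⁻¹ (inv_ne_one.2 hh) _ ⟨tl e'', l1, hl1⟩
  refine ⟨(oG (G := G) h⁻¹ • oZ (G := G) (-(av i)) • w).toList, ?_⟩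
  rw [h1]
  exact smul_toList_of_ne (b := false) (tl (-(bv i)))
    (tl_ne_one (by have := bv_pos i; omega)) _ (by rw [fstIdx_of_toList hl2]; simp)

lemma cel_pow_smul (h : G) (hh : h ≠ 1) (i : Fin m) :
    ∀ (k : ℕ), k ≠ 0 → ∀ w : Word (M2 G),
      ((∃ g : G, ∃ l, w.toList = ⟨true, g⟩ :: l) ∨
        (∃ e' l, w.toList = ⟨false, tl e'⟩ :: l ∧ bv i + e' ≠ 0)) →
      ∃ l, (((cel h i) ^ k) • w).toList = ⟨false, tl (av i)⟩ :: l := by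
  intro k
  induction k with
  | zero => intro hk; exact absurd rfl hk
  | succ k ih =>
    intro _ w hw
    rcases Nat.eq_zero_or_pos k with hk | hk
    · subst hk
      simpa [pow_one] using cel_smul h hh i w hw
    · obtain ⟨l, hl⟩ := ih hk.ne' w hw
      have hstep : (cel h i) ^ (k + 1) • w = (cel h i) • ((cel h i) ^ k • w) := by
        rw [pow_succ', mul_smul]
      rw [hstep]
      refine cel_smul h hh i _ (Or.inr ⟨av i, l, hl, ?_⟩)
      have := av_add_bv i
      omega

lemma cel_inv_pow_smul (h : G) (hh : h ≠ 1) (i : Fin m) :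
    ∀ (k : ℕ), k ≠ 0 → ∀ w : Word (M2 G),
      ((∃ g : G, ∃ l, w.toList = ⟨true, g⟩ :: l) ∨
        (∃ e' l, w.toList = ⟨false, tl e'⟩ :: l ∧ -(av i) + e' ≠ 0)) →
      ∃ l, (((cel h i)⁻¹ ^ k) • w).toList = ⟨false, tl (-(bv i))⟩ :: l := by
  intro k
  induction k with
  | zero => intro hk; exact absurd rfl hk
  | succ k ih =>
    intro _ w hw
    rcases Nat.eq_zero_or_pos k with hk | hk
    · subst hk
      simpa [pow_one] using cel_inv_smul h hh i w hw
    · obtain ⟨l, hl⟩ := ih hk.ne' w hw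
      have hstep : (cel h i)⁻¹ ^ (k + 1) • w = (cel h i)⁻¹ • ((cel h i)⁻¹ ^ k • w) := by
        rw [pow_succ', mul_smul]
      rw [hstep]
      refine cel_inv_smul h hh i _ (Or.inr ⟨-(bv i), l, hl, ?_⟩)
      have := av_add_bv i
      omega

lemma cel_zpow_smul (h : G) (hh : h ≠ 1) (i : Fin m) (n : ℤ) (hn : n ≠ 0) (w : Word (M2 G))
    (hw : (∃ g : G, ∃ l, w.toList = ⟨true, g⟩ :: l) ∨
      (∃ e' l, w.toList = ⟨false, tl e'⟩ :: l ∧ ((e' : ZMod (m + 1)) ≠ mark i))) :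
    ∃ e l, (((cel h i) ^ n) • w).toList = ⟨false, tl e⟩ :: l ∧
      ((e : ZMod (m + 1)) = mark i) := by
  rcases lt_or_gt_of_ne hn with hneg | hpos
  · have hk : (((-n).toNat : ℤ)) = -n := Int.toNat_of_nonneg (by omega)
    have hpow : (cel h i) ^ n = ((cel h i)⁻¹) ^ ((-n).toNat) := by
      rw [← zpow_natCast, hk, _root_.inv_zpow', neg_neg]
    have hw' : (∃ g : G, ∃ l, w.toList = ⟨true, g⟩ :: l) ∨
        (∃ e' l, w.toList = ⟨false, tl e'⟩ :: l ∧ -(av i) + e' ≠ 0) := by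
      rcases hw with hw | ⟨e', l, hl, hne⟩
      · exact Or.inl hw
      · refine Or.inr ⟨e', l, hl, fun hc => hne ?_⟩
        have : e' = av i := by omega
        rw [this, cast_av]
    obtain ⟨l, hl⟩ := cel_inv_pow_smul h hh i ((-n).toNat) (by omega) w hw'
    exact ⟨-(bv i), l, by rw [hpow]; exact hl, cast_neg_bv i⟩
  · have hk : ((n.toNat : ℤ)) = n := Int.toNat_of_nonneg (by omega)
    have hpow : (cel h i) ^ n = (cel h i) ^ (n.toNat) := by
      rw [← zpow_natCast, hk]
    have hw' : (∃ g : G, ∃ l, w.toList = ⟨true, g⟩ :: l) ∨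
        (∃ e' l, w.toList = ⟨false, tl e'⟩ :: l ∧ bv i + e' ≠ 0) := by
      rcases hw with hw | ⟨e', l, hl, hne⟩
      · exact Or.inl hw
      · refine Or.inr ⟨e', l, hl, fun hc => hne ?_⟩
        have : e' = -(bv i) := by omega
        rw [this, cast_neg_bv]
    obtain ⟨l, hl⟩ := cel_pow_smul h hh i (n.toNat) (by omega) w hw'
    exact ⟨av i, l, by rw [hpow]; exact hl, cast_av i⟩

end
end Stmt5Aux

namespace Stmt5Aux
section
universe v
variable {G : Type v} [Group G]

noncomputable local instance : ∀ b, DecidableEq (M2 G b) := fun _ => Classical.decEq _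

variable {m : ℕ}

/-- the `(m+1)`-factor family: `none ↦ G`, `some i ↦ ℤ` -/
def M1 (G : Type v) [Group G] (m : ℕ) : Option (Fin m) → Type v :=
  fun o => match o with
  | none => G
  | some _ => ZG

instance M1.instGroup : ∀ o, Group (M1 G m o)
  | none => inferInstanceAs (Group G)
  | some _ => inferInstanceAs (Group ZG)

/-- the factor maps into `G ∗ ℤ` -/
def fmap (h : G) : ∀ o : Option (Fin m), M1 G m o →* CoprodI (M2 G)
  | none => CoprodI.of (M := M2 G) (i := true)
  | some i => (zpowersHom _ (cel h i)).comp (MulEquiv.ulift.toMonoidHom)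

/-- ping-pong sets -/
def XS (G : Type v) [Group G] (m : ℕ) : Option (Fin m) → Set (Word (M2 G))
  | none => {w | ∃ g l, w.toList = ⟨true, g⟩ :: l}
  | some i => {w | ∃ e l, w.toList = ⟨false, tl e⟩ :: l ∧ ((e : ZMod (m + 1)) = mark i)}

lemma fstIdx_empty : (Word.empty : Word (M2 G)).fstIdx = none := rfl

lemma XS_nonempty (h : G) (hh : h ≠ 1) : ∀ o, (XS G m o).Nonempty := by
  intro o
  match o with
  | none =>
    refine ⟨oG (G := G) h • Word.empty, h, [], ?_⟩
    rw [smul_toList_of_ne (b := true) h hh _ (by rw [fstIdx_empty]; simp)]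
    rfl
  | some i =>
    refine ⟨oZ (G := G) (av i) • Word.empty, av i, [], ?_, cast_av i⟩
    rw [smul_toList_of_ne (b := false) (tl (av i)) (tl_ne_one (av_pos i).ne') _
      (by rw [fstIdx_empty]; simp)]
    rfl

lemma XS_disjoint : Pairwise (Function.onFun Disjoint (XS G m)) := by
  intro o o' ho
  rw [Function.onFun, Set.disjoint_left]
  rintro w hw hw'
  match o, o' with
  | none, none => exact ho rfl
  | none, some j =>
    obtain ⟨g, l, hl⟩ := hw
    obtain ⟨e, l', hl', -⟩ := hw'
    rw [hl] at hl'
    have h1 := (List.cons.injEq _ _ _ _ ▸ hl').1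
    exact Bool.noConfusion (congrArg Sigma.fst h1)
  | some i, none =>
    obtain ⟨e, l', hl', -⟩ := hw
    obtain ⟨g, l, hl⟩ := hw'
    rw [hl] at hl'
    have h1 := (List.cons.injEq _ _ _ _ ▸ hl').1
    exact Bool.noConfusion (congrArg Sigma.fst h1)
  | some i, some j =>
    obtain ⟨e, l, hl, he⟩ := hw
    obtain ⟨e', l', hl', he'⟩ := hw'
    rw [hl] at hl'
    have h1 : (⟨false, tl e⟩ : Σ b, M2 G b) = ⟨false, tl e'⟩ := by
      exact (List.cons.injEq _ _ _ _ ▸ hl').1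
    have h2 : tl e = tl e' := by
      exact eq_of_heq (Sigma.mk.inj h1).2
    have : e = e' := tl_inj h2
    subst this
    exact ho (by rw [mark_inj ((he.symm.trans he'))])
end
end Stmt5Aux

namespace Stmt5Aux
section
universe v
variable {G : Type v} [Group G]

noncomputable local instance : ∀ b, DecidableEq (M2 G b) := fun _ => Classical.decEq _

open Pointwise

variable {m : ℕ}

lemma zg_ne_one_iff (x : ZG) : x ≠ 1 ↔ Multiplicative.toAdd x.down ≠ 0 := by
  rw [Ne, Ne, toAdd_eq_zero, ULift.ext_iff]
  rfl

lemma fmap_some_apply (h : G) (i : Fin m) (x : ZG) :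
    fmap h (some i) x = (cel h i) ^ (Multiplicative.toAdd x.down) := by
  rfl

lemma XS_pp (h : G) (hh : h ≠ 1) :
    Pairwise fun o o' => ∀ x : M1 G m o, x ≠ 1 → fmap h o x • XS G m o' ⊆ XS G m o := by
  intro o o' ho
  match o, o' with
  | none, none => exact absurd rfl ho
  | some i, some j =>
    have hij : i ≠ j := fun hc => ho (by rw [hc])
    intro x hx w hw
    obtain ⟨w', hw', rfl⟩ := hw
    obtain ⟨e, l, hl, he⟩ := hw'
    have hn : Multiplicative.toAdd x.down ≠ 0 := (zg_ne_one_iff x).1 hx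
    beta_reduce
    erw [fmap_some_apply]
    have hmod : (e : ZMod (m + 1)) ≠ mark i := by
      rw [he]
      intro hc
      exact hij (mark_inj hc).symm
    obtain ⟨e', l', hl', he'⟩ :=
      cel_zpow_smul h hh i _ hn w' (Or.inr ⟨e, l, hl, hmod⟩)
    exact ⟨e', l', hl', he'⟩
  | some i, none =>
    intro x hx w hw
    obtain ⟨w', hw', rfl⟩ := hw
    obtain ⟨g, l, hl⟩ := hw'
    have hn : Multiplicative.toAdd x.down ≠ 0 := (zg_ne_one_iff x).1 hx
    beta_reduce
    erw [fmap_some_apply]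
    obtain ⟨e', l', hl', he'⟩ :=
      cel_zpow_smul h hh i _ hn w' (Or.inl ⟨g, l, hl⟩)
    exact ⟨e', l', hl', he'⟩
  | none, some j =>
    intro x hx w hw
    obtain ⟨w', hw', rfl⟩ := hw
    obtain ⟨e, l, hl⟩ := hw'
    refine ⟨x, w'.toList, ?_⟩
    show ((oG (G := G) x) • w').toList = ⟨true, x⟩ :: w'.toList
    exact gstep x hx w' ⟨tl e, l, hl.1⟩
end
end Stmt5Aux

namespace Stmt5Aux
section
universe v
variable {G : Type v} [Group G]

noncomputable local instance : ∀ b, DecidableEq (M2 G b) := fun _ => Classical.decEq _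

variable {m : ℕ}

lemma liftf_injective (h : G) (hh : h ≠ 1) (hm : 1 ≤ m) :
    Function.Injective (CoprodI.lift (fmap (m := m) h)) := by
  haveI : Nonempty (Fin m) := ⟨⟨0, hm⟩⟩
  haveI : Nontrivial (Option (Fin m)) := ⟨⟨none, some ⟨0, hm⟩, by simp⟩⟩
  refine lift_injective_of_ping_pong (fmap h) ?_ (XS G m) (XS_nonempty h hh)
    XS_disjoint (XS_pp h hh)
  right
  refine ⟨some ⟨0, hm⟩, ?_⟩
  have h1 : (3 : Cardinal) ≤ Cardinal.aleph0 := by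
    exact_mod_cast (Cardinal.nat_lt_aleph0 3).le
  haveI : Infinite (M1 G m (some ⟨0, hm⟩)) := inferInstanceAs (Infinite ZG)
  exact h1.trans (Cardinal.aleph0_le_mk (M1 G m (some ⟨0, hm⟩)))
end
end Stmt5Aux

abbrev MixedWordGroup' (G : Type*) [Group G] : Type _ := Monoid.Coprod G (Multiplicative ℤ)
abbrev MultiMixedWordGroup' (G : Type*) [Group G] (m : ℕ) : Type _ :=
  Monoid.Coprod G (FreeGroup (Fin m))

namespace Stmt5Aux
section
universe v
variable {G : Type v} [Group G]

noncomputable local instance : ∀ b, DecidableEq (M2 G b) := fun _ => Classical.decEq _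

variable {m : ℕ}

/-- `Γ ∗ F_m → ∗-product over Option (Fin m)` -/
def e1 : MultiMixedWordGroup' G m →* CoprodI (M1 G m) :=
  Coprod.lift (CoprodI.of (M := M1 G m) (i := none))
    (FreeGroup.lift fun i => CoprodI.of (M := M1 G m) (i := some i)
      (ULift.up (Multiplicative.ofAdd (1 : ℤ))))

def e1inv : CoprodI (M1 G m) →* MultiMixedWordGroup' G m :=
  CoprodI.lift (fun o => match o with
    | none => Coprod.inl
    | some i => (Coprod.inr (M := G)).comp
        ((zpowersHom _ (FreeGroup.of i)).comp MulEquiv.ulift.toMonoidHom))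

lemma e1_inl (g : G) :
    e1 (G := G) (m := m) (Coprod.inl g) = CoprodI.of (M := M1 G m) (i := none) g :=
  Coprod.lift_apply_inl _ _ g

lemma e1_of (i : Fin m) :
    e1 (G := G) (m := m) (Coprod.inr (FreeGroup.of i)) =
      CoprodI.of (M := M1 G m) (i := some i) (ULift.up (Multiplicative.ofAdd (1 : ℤ))) := by
  simp [e1]
  erw [Coprod.lift_apply_inr, FreeGroup.lift_apply_of]

lemma e1inv_comp_e1 :
    (e1inv (G := G) (m := m)).comp e1 = MonoidHom.id _ := by
  apply Coprod.hom_ext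
  · ext g
    show e1inv (e1 (Coprod.inl g)) = Coprod.inl g
    rw [e1_inl]
    exact CoprodI.lift_of _ _
  · ext i
    show e1inv (e1 (Coprod.inr (FreeGroup.of i))) = Coprod.inr (FreeGroup.of i)
    rw [e1_of]
    have h2 : e1inv (G := G) (m := m)
        (CoprodI.of (M := M1 G m) (i := some i) (ULift.up (Multiplicative.ofAdd (1 : ℤ)))) =
        Coprod.inr ((FreeGroup.of i) ^ (1 : ℤ)) := CoprodI.lift_of _ _
    rw [h2, zpow_one]

lemma e1_injective : Function.Injective (e1 (G := G) (m := m)) := by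
  have h : Function.LeftInverse (e1inv (G := G) (m := m)) e1 := fun x => by
    rw [← MonoidHom.comp_apply, e1inv_comp_e1, MonoidHom.id_apply]
  exact h.injective

/-- `∗-product over Bool → Γ ∗ ℤ` -/
def e2 : CoprodI (M2 G) →* MixedWordGroup' G :=
  CoprodI.lift (fun b => match b with
    | true => Coprod.inl
    | false => (Coprod.inr (M := G)).comp MulEquiv.ulift.toMonoidHom)

def e2inv : MixedWordGroup' G →* CoprodI (M2 G) :=
  Coprod.lift (CoprodI.of (M := M2 G) (i := true))
    ((CoprodI.of (M := M2 G) (i := false)).comp (MulEquiv.ulift.symm.toMonoidHom))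

lemma e2inv_comp_e2 :
    (e2inv (G := G)).comp e2 = MonoidHom.id _ := by
  apply CoprodI.ext_hom
  intro b
  match b with
  | true =>
    ext g
    show e2inv (e2 (CoprodI.of (M := M2 G) (i := true) g)) = CoprodI.of (M := M2 G) (i := true) g
    rw [show (e2 (G := G)) (CoprodI.of (M := M2 G) (i := true) g) = Coprod.inl g from
      CoprodI.lift_of _ _]
    exact Coprod.lift_apply_inl _ _ g
  | false =>
    ext z
    show e2inv (e2 (CoprodI.of (M := M2 G) (i := false) z)) = CoprodI.of (M := M2 G) (i := false) z
    rw [show (e2 (G := G)) (CoprodI.of (M := M2 G) (i := false) z) =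
      Coprod.inr (MulEquiv.ulift z) from CoprodI.lift_of _ _]
    rw [show (e2inv (G := G)) (Coprod.inr (MulEquiv.ulift z)) =
      CoprodI.of (M := M2 G) (i := false) (MulEquiv.ulift.symm (MulEquiv.ulift z)) from
      Coprod.lift_apply_inr _ _ _]
    exact congrArg _ (MulEquiv.ulift.symm_apply_apply z)

lemma e2_injective : Function.Injective (e2 (G := G)) := by
  have h : Function.LeftInverse (e2inv (G := G)) e2 := fun x => by
    rw [← MonoidHom.comp_apply, e2inv_comp_e2, MonoidHom.id_apply]
  exact h.injective

/-- The composite embedding `Γ ∗ F_m → Γ ∗ ℤ` over `Γ`. -/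
def Phi (h : G) (m : ℕ) : MultiMixedWordGroup' G m →* MixedWordGroup' G :=
  e2.comp ((CoprodI.lift (fmap (m := m) h)).comp e1)

lemma Phi_injective (h : G) (hh : h ≠ 1) (hm : 1 ≤ m) :
    Function.Injective (Phi (G := G) h m) :=
  e2_injective.comp ((liftf_injective h hh hm).comp e1_injective)

lemma Phi_inl (h : G) (g : G) :
    Phi (G := G) h m (Coprod.inl g) = Coprod.inl g := by
  show e2 ((CoprodI.lift (fmap h)) (e1 (Coprod.inl g))) = _
  rw [e1_inl,
    show (CoprodI.lift (fmap (m := m) h)) (CoprodI.of (M := M1 G m) (i := none) g) =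
      CoprodI.of (M := M2 G) (i := true) g from CoprodI.lift_of _ _,
    show (e2 (G := G)) (CoprodI.of (M := M2 G) (i := true) g) = Coprod.inl g from
      CoprodI.lift_of _ _]

end
end Stmt5Aux


theorem stmt5 {G : Type*} [Group G]
    (hMIF : ∀ w : MixedWordGroup G, w ≠ 1 → ∃ γ : G, evalWord γ w ≠ 1) :
    ∀ m : ℕ, 1 ≤ m → ∀ w : MultiMixedWordGroup G m, w ≠ 1 →
      ∃ γ : Fin m → G, evalMultiWord γ w ≠ 1 := by
  intro m hm w hw
  -- first produce a nontrivial element of `G`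
  have hx : xGen G ≠ 1 := by
    intro hc
    have h1 : (Multiplicative.ofAdd (1 : ℤ)) = 1 := by
      simpa [xGen] using congrArg Monoid.Coprod.snd hc
    simpa using congrArg Multiplicative.toAdd h1
  obtain ⟨h0, hh0⟩ := hMIF (xGen G) hx
  have hev : evalWord h0 (xGen G) = h0 := by
    rw [xGen, evalWord, Monoid.Coprod.lift_apply_inr, zpowersHom_apply]
    simp
  have hh0' : h0 ≠ 1 := fun hc => hh0 (hev.trans hc)
  have hinj := Stmt5Aux.Phi_injective (G := G) h0 hh0' hm
  have hPw : Stmt5Aux.Phi (G := G) h0 m w ≠ 1 := fun hc => hw (hinj (by rw [hc]; exact (_root_.map_one _).symm))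
  obtain ⟨γ0, hγ0⟩ := hMIF (Stmt5Aux.Phi (G := G) h0 m w) hPw
  refine ⟨fun i => evalWord γ0 (Stmt5Aux.Phi (G := G) h0 m (Monoid.Coprod.inr (FreeGroup.of i))),
    ?_⟩
  have key : evalMultiWord
      (fun i => evalWord γ0 (Stmt5Aux.Phi (G := G) h0 m (Monoid.Coprod.inr (FreeGroup.of i)))) =
      (evalWord γ0).comp (Stmt5Aux.Phi (G := G) h0 m) := by
    apply Monoid.Coprod.hom_ext
    · ext g
      simp only [MonoidHom.comp_apply]
      rw [Stmt5Aux.Phi_inl, evalMultiWord, Monoid.Coprod.lift_apply_inl, evalWord,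
        Monoid.Coprod.lift_apply_inl]
    · ext i
      simp only [MonoidHom.comp_apply]
      rw [evalMultiWord, Monoid.Coprod.lift_apply_inr, FreeGroup.lift_apply_of]
  intro hc
  apply hγ0
  rw [← MonoidHom.comp_apply, ← key, hc]
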